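/- Let T be a contraction on a complex Hilbert space H and let A be a bounded operator on H with AT = TA. Define the bounded map D : H → ℓ²(ℕ, 𝒟_{T*}) by Dh := (D_{T*} T*ᵏ h)_{k≥0}. Let E and F be bounded operators on 𝒟_{T*}, set Φ(z) = E* + zF, and let M_Φ := (E*)~ + S∘F̃ on ℓ²(ℕ, 𝒟_{T*}). Then M_Φ* ∘ D = D ∘ A* if and only if D_{T*} A* h = E (D_{T*} h) + F* (D_{T*} T* h) for all h ∈ H. -/

import Mathlib

noncomputable section

open scoped ENNReal

namespace GammaModel

variable {E : Type*} [NormedAddCommGroup E] [NormedSpace ℂ E]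

/-- The `E`-valued Hardy space `H²_E(𝔻)`, identified with `ℓ²(ℕ, E)`. -/
abbrev L2 (E : Type*) [NormedAddCommGroup E] [NormedSpace ℂ E] : Type _ :=
  lp (fun _ : ℕ => E) 2

/-- The underlying function of the unilateral shift. -/
def shiftFun (f : ℕ → E) : ℕ → E
  | 0 => 0
  | (k + 1) => f k

lemma rpow_toReal_two (x : ℝ) : x ^ ((2 : ℝ≥0∞)).toReal = x ^ (2 : ℕ) := by
  rw [show ((2 : ℝ≥0∞)).toReal = ((2 : ℕ) : ℝ) by norm_num, Real.rpow_natCast]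

lemma summable_sq_of_mem (f : L2 E) :
    Summable (fun k => ‖(f : ∀ _ : ℕ, E) k‖ ^ (2 : ℕ)) := by
  have h := lp.memℓp f
  rw [memℓp_gen_iff (by norm_num)] at h
  simpa [rpow_toReal_two] using h

lemma memℓp_shiftFun (f : L2 E) : Memℓp (shiftFun (f : ∀ _ : ℕ, E)) 2 := by
  rw [memℓp_gen_iff (by norm_num)]
  apply (summable_nat_add_iff 1).mp
  simpa [shiftFun, rpow_toReal_two] using summable_sq_of_mem f

/-- The unilateral shift as a linear map on `ℓ²(ℕ, E)`. -/
def shiftLM : L2 E →ₗ[ℂ] L2 E where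
  toFun f := ⟨shiftFun (f : ∀ _ : ℕ, E), memℓp_shiftFun f⟩
  map_add' f g := by
    ext k
    cases k <;> simp [shiftFun, lp.coeFn_add, Pi.add_apply] <;> erw [Pi.add_apply] <;> simp [shiftFun]
  map_smul' c f := by
    ext k
    cases k <;> simp [shiftFun, lp.coeFn_smul, Pi.smul_apply]

lemma norm_shiftLM (f : L2 E) : ‖shiftLM f‖ = ‖f‖ := by
  have h2 : (0:ℝ) < ((2 : ℝ≥0∞)).toReal := by norm_num
  have hs := lp.norm_rpow_eq_tsum h2 (shiftLM f)
  have hf := lp.norm_rpow_eq_tsum h2 f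
  have hsum : Summable (fun k => ‖(shiftLM f : ∀ _ : ℕ, E) k‖ ^ ((2:ℝ≥0∞)).toReal) := by
    have h := memℓp_shiftFun f
    rw [memℓp_gen_iff h2] at h
    exact h
  have key : ∑' k, ‖(shiftLM f : ∀ _ : ℕ, E) k‖ ^ ((2:ℝ≥0∞)).toReal
      = ∑' k, ‖(f : ∀ _ : ℕ, E) k‖ ^ ((2:ℝ≥0∞)).toReal := by
    rw [Summable.tsum_eq_zero_add hsum]
    simp [shiftLM, shiftFun]
  have : ‖shiftLM f‖ ^ ((2:ℝ≥0∞)).toReal = ‖f‖ ^ ((2:ℝ≥0∞)).toReal := by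
    rw [hs, hf, key]
  rw [rpow_toReal_two, rpow_toReal_two] at this
  have h1 : (0:ℝ) ≤ ‖shiftLM f‖ := norm_nonneg _
  have h2' : (0:ℝ) ≤ ‖f‖ := norm_nonneg _
  nlinarith [this, h1, h2']

/-- The unilateral shift `S` on `ℓ²(ℕ, E)`: `(Sf)(0) = 0`, `(Sf)(k+1) = f(k)`. -/
def shiftL : L2 E →L[ℂ] L2 E :=
  LinearMap.mkContinuous shiftLM 1 (fun f => by rw [norm_shiftLM]; simp)

@[simp] lemma shiftL_apply_zero (f : L2 E) : (shiftL f : ∀ _ : ℕ, E) 0 = 0 := rfl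

@[simp] lemma shiftL_apply_succ (f : L2 E) (k : ℕ) :
    (shiftL f : ∀ _ : ℕ, E) (k + 1) = (f : ∀ _ : ℕ, E) k := rfl

lemma memℓp_diagFun (C : E →L[ℂ] E) (f : L2 E) :
    Memℓp (fun k => C ((f : ∀ _ : ℕ, E) k)) 2 := by
  rw [memℓp_gen_iff (by norm_num)]
  have hf := summable_sq_of_mem f
  refine Summable.of_nonneg_of_le (f := fun k => ‖C‖ ^ (2:ℕ) * ‖(f : ∀ _ : ℕ, E) k‖ ^ (2:ℕ))
    (fun k => by positivity) (fun k => ?_) (hf.mul_left _)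
  show ‖C ((f : ∀ _ : ℕ, E) k)‖ ^ ((2:ℝ≥0∞)).toReal ≤ ‖C‖ ^ (2:ℕ) * ‖(f : ∀ _ : ℕ, E) k‖ ^ (2:ℕ)
  rw [rpow_toReal_two, ← mul_pow]
  exact pow_le_pow_left₀ (norm_nonneg _) (C.le_opNorm _) 2

/-- The diagonal operator `C̃` on `ℓ²(ℕ, E)`: `(C̃ f)(k) = C (f k)`. -/
def diagLM (C : E →L[ℂ] E) : L2 E →ₗ[ℂ] L2 E where
  toFun f := ⟨fun k => C ((f : ∀ _ : ℕ, E) k), memℓp_diagFun C f⟩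
  map_add' f g := by ext k; simp [lp.coeFn_add, Pi.add_apply]; rfl
  map_smul' c f := by ext k; simp [lp.coeFn_smul, Pi.smul_apply]

lemma norm_diagLM (C : E →L[ℂ] E) (f : L2 E) : ‖diagLM C f‖ ≤ ‖C‖ * ‖f‖ := by
  have h2 : (0:ℝ) < ((2 : ℝ≥0∞)).toReal := by norm_num
  have hs := lp.norm_rpow_eq_tsum h2 (diagLM C f)
  have hf := lp.norm_rpow_eq_tsum h2 f
  have hsum : Summable (fun k => ‖(diagLM C f : ∀ _ : ℕ, E) k‖ ^ ((2:ℝ≥0∞)).toReal) := by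
    have h := memℓp_diagFun C f
    rw [memℓp_gen_iff h2] at h
    exact h
  have hle : ‖diagLM C f‖ ^ (2:ℕ) ≤ (‖C‖ * ‖f‖) ^ (2:ℕ) := by
    rw [← rpow_toReal_two, hs]
    calc ∑' k, ‖(diagLM C f : ∀ _ : ℕ, E) k‖ ^ ((2:ℝ≥0∞)).toReal
        ≤ ∑' k, ‖C‖ ^ (2:ℕ) * ‖(f : ∀ _ : ℕ, E) k‖ ^ (2:ℕ) := by
          apply Summable.tsum_le_tsum _ hsum ((summable_sq_of_mem f).mul_left _)
          intro k
          show ‖(diagLM C f : ∀ _ : ℕ, E) k‖ ^ ((2:ℝ≥0∞)).toReal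
            ≤ ‖C‖ ^ (2:ℕ) * ‖(f : ∀ _ : ℕ, E) k‖ ^ (2:ℕ)
          rw [rpow_toReal_two, ← mul_pow]
          exact pow_le_pow_left₀ (norm_nonneg _) (C.le_opNorm _) 2
      _ = ‖C‖ ^ (2:ℕ) * ∑' k, ‖(f : ∀ _ : ℕ, E) k‖ ^ (2:ℕ) := by rw [tsum_mul_left]
      _ = (‖C‖ * ‖f‖) ^ (2:ℕ) := by
          rw [mul_pow]
          congr 1
          rw [← rpow_toReal_two ‖f‖, hf]
          exact (tsum_congr (fun k => by rw [rpow_toReal_two])).symm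
  have := le_of_pow_le_pow_left₀ (by norm_num) (by positivity) hle
  exact this

/-- The operator `C̃` on `ℓ²(ℕ, E)` induced by `C : E →L[ℂ] E`, `(C̃ f)(k) = C (f k)`. -/
def diagL (C : E →L[ℂ] E) : L2 E →L[ℂ] L2 E :=
  LinearMap.mkContinuous (diagLM C) ‖C‖ (norm_diagLM C)

@[simp] lemma diagL_apply (C : E →L[ℂ] E) (f : L2 E) (k : ℕ) :
    (diagL C f : ∀ _ : ℕ, E) k = C ((f : ∀ _ : ℕ, E) k) := rfl

end GammaModel

namespace GammaModel

instance completeSpace_topologicalClosure {H : Type*} [NormedAddCommGroup H] [NormedSpace ℂ H]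
    [CompleteSpace H] (K : Submodule ℂ H) : CompleteSpace ↥(K.topologicalClosure) :=
  K.isClosed_topologicalClosure.completeSpace_coe

end GammaModel

namespace GammaModel

variable {E : Type*} [NormedAddCommGroup E] [NormedSpace ℂ E]

lemma memℓp_backFun (f : L2 E) : Memℓp (fun k => (f : ∀ _ : ℕ, E) (k + 1)) 2 := by
  rw [memℓp_gen_iff (by norm_num)]
  have h := (summable_nat_add_iff 1).mpr (summable_sq_of_mem f)
  simpa [rpow_toReal_two] using h

/-- The backward shift as a linear map. -/
def backLM : L2 E →ₗ[ℂ] L2 E where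
  toFun f := ⟨fun k => (f : ∀ _ : ℕ, E) (k + 1), memℓp_backFun f⟩
  map_add' f g := by ext k; simp [lp.coeFn_add, Pi.add_apply]; rfl
  map_smul' c f := by ext k; simp [lp.coeFn_smul, Pi.smul_apply]

lemma norm_backLM (f : L2 E) : ‖backLM f‖ ≤ ‖f‖ := by
  have h2 : (0:ℝ) < ((2 : ℝ≥0∞)).toReal := by norm_num
  have hs := lp.norm_rpow_eq_tsum h2 (backLM f)
  have hf := lp.norm_rpow_eq_tsum h2 f
  have hsum : Summable (fun k => ‖(f : ∀ _ : ℕ, E) k‖ ^ ((2:ℝ≥0∞)).toReal) := by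
    simpa [rpow_toReal_two] using summable_sq_of_mem f
  have key : ‖backLM f‖ ^ ((2:ℝ≥0∞)).toReal ≤ ‖f‖ ^ ((2:ℝ≥0∞)).toReal := by
    rw [hs, hf, Summable.tsum_eq_zero_add hsum]
    have : ∑' k, ‖(backLM f : ∀ _ : ℕ, E) k‖ ^ ((2:ℝ≥0∞)).toReal
        = ∑' k, ‖(f : ∀ _ : ℕ, E) (k + 1)‖ ^ ((2:ℝ≥0∞)).toReal := rfl
    rw [this]
    have h0 : (0:ℝ) ≤ ‖(f : ∀ _ : ℕ, E) 0‖ ^ ((2:ℝ≥0∞)).toReal :=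
      Real.rpow_nonneg (norm_nonneg _) _
    linarith
  rw [rpow_toReal_two, rpow_toReal_two] at key
  nlinarith [norm_nonneg (backLM f), norm_nonneg f, key]

/-- The backward shift `S*` on `ℓ²(ℕ, E)`. -/
def backL : L2 E →L[ℂ] L2 E := LinearMap.mkContinuous backLM 1 (fun f => by
  simpa using norm_backLM f)

@[simp] lemma backL_apply (f : L2 E) (k : ℕ) :
    (backL f : ∀ _ : ℕ, E) k = (f : ∀ _ : ℕ, E) (k + 1) := rfl

section Adjoints

open ContinuousLinearMap

variable {E : Type*} [NormedAddCommGroup E] [InnerProductSpace ℂ E] [CompleteSpace E]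

lemma adjoint_diagL (C : E →L[ℂ] E) :
    adjoint (diagL C) = diagL (adjoint C) := by
  symm
  rw [eq_adjoint_iff]
  intro f g
  rw [lp.inner_eq_tsum, lp.inner_eq_tsum]
  exact tsum_congr fun k => by
    simpa using adjoint_inner_left (𝕜 := ℂ) C ((g : ∀ _ : ℕ, E) k) ((f : ∀ _ : ℕ, E) k)

lemma adjoint_shiftL : adjoint (shiftL : L2 E →L[ℂ] L2 E) = backL := by
  symm
  rw [eq_adjoint_iff]
  intro f g
  rw [lp.inner_eq_tsum, lp.inner_eq_tsum]
  have hsum : Summable (fun k => (inner ℂ ((f : ∀ _ : ℕ, E) k)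
      ((shiftL g : ∀ _ : ℕ, E) k) : ℂ)) :=
    (lp.hasSum_inner f (shiftL g)).summable
  rw [Summable.tsum_eq_zero_add hsum]
  simp

lemma adjoint_MPhi_apply (Eop Fop : E →L[ℂ] E) (f : L2 E) (k : ℕ) :
    (adjoint (diagL (adjoint Eop) + shiftL.comp (diagL Fop)) f : ∀ _ : ℕ, E) k
      = Eop ((f : ∀ _ : ℕ, E) k) + adjoint Fop ((f : ∀ _ : ℕ, E) (k + 1)) := by
  have : adjoint (diagL (adjoint Eop) + shiftL.comp (diagL Fop))
      = diagL Eop + (diagL (adjoint Fop)).comp backL := by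
    rw [map_add, adjoint_comp, adjoint_diagL, adjoint_diagL, adjoint_adjoint, adjoint_shiftL]
  rw [this]
  have := lp.coeFn_add (diagL Eop f) ((diagL (adjoint Fop)).comp backL f)
  simp [ContinuousLinearMap.add_apply, lp.coeFn_add, Pi.add_apply]

end Adjoints

end GammaModel


open GammaModel ContinuousLinearMap

set_option maxHeartbeats 2000000 in
/-- Let `T` be a contraction with defect operator `D_{T*}` and defect space
`𝒟_{T*} = closure (range D_{T*})`, let `D h := (D_{T*} T*ᵏ h)_k` and let `A` commute with `T`.
For operators `E, F` on `𝒟_{T*}` and `M_Φ = (E*)~ + S∘F̃` one has `M_Φ* ∘ D = D ∘ A*` iff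
`D_{T*} A* h = E (D_{T*} h) + F* (D_{T*} T* h)` for all `h`. -/
theorem intertwine_iff_fundamental_equation {H : Type*}
    [NormedAddCommGroup H] [InnerProductSpace ℂ H] [CompleteSpace H]
    (T : H →L[ℂ] H) (hT : ‖T‖ ≤ 1)
    (DT : H →L[ℂ] H) (hDTpos : DT.IsPositive)
    (hDTsq : DT * DT = 1 - T * adjoint T)
    (DD : H →L[ℂ] L2 ↥((LinearMap.range (DT : H →ₗ[ℂ] H)).topologicalClosure))
    (hDD : ∀ (h : H) (k : ℕ),
      ((DD h : ∀ _ : ℕ, ↥((LinearMap.range (DT : H →ₗ[ℂ] H)).topologicalClosure)) k : H)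
        = DT ((adjoint T ^ k) h))
    (A : H →L[ℂ] H) (hAT : A * T = T * A)
    (Eop Fop : ↥((LinearMap.range (DT : H →ₗ[ℂ] H)).topologicalClosure)
      →L[ℂ] ↥((LinearMap.range (DT : H →ₗ[ℂ] H)).topologicalClosure)) :
    (adjoint (diagL (adjoint Eop) + shiftL.comp (diagL Fop))).comp DD = DD.comp (adjoint A)
    ↔ ∀ h : H,
        DT (adjoint A h)
          = (↑(Eop ⟨DT h, Submodule.le_topologicalClosure _ (LinearMap.mem_range_self _ _)⟩) : H)
          + (↑((adjoint Fop)
              ⟨DT (adjoint T h),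
                Submodule.le_topologicalClosure _ (LinearMap.mem_range_self _ _)⟩) : H) := by
  classical
  have memDT : ∀ x : H, DT x ∈ (LinearMap.range (DT : H →ₗ[ℂ] H)).topologicalClosure :=
    fun x => Submodule.le_topologicalClosure _ (LinearMap.mem_range_self _ _)
  -- commutation of adjoints
  have hc : adjoint T * adjoint A = adjoint A * adjoint T := by
    have h1 := congrArg adjoint hAT
    rw [ContinuousLinearMap.mul_def, ContinuousLinearMap.mul_def, adjoint_comp,
      adjoint_comp] at h1
    rw [ContinuousLinearMap.mul_def, ContinuousLinearMap.mul_def]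
    exact h1
  have hck : ∀ (k : ℕ) (h : H),
      (adjoint T ^ k) (adjoint A h) = adjoint A ((adjoint T ^ k) h) := by
    intro k h
    have hpk : adjoint T ^ k * adjoint A = adjoint A * adjoint T ^ k :=
      (Commute.pow_left hc k)
    calc (adjoint T ^ k) (adjoint A h) = (adjoint T ^ k * adjoint A) h := rfl
      _ = (adjoint A * adjoint T ^ k) h := by rw [hpk]
      _ = adjoint A ((adjoint T ^ k) h) := rfl
  have DDk : ∀ (h : H) (k : ℕ),
      (DD h : ∀ _ : ℕ, ↥((LinearMap.range (DT : H →ₗ[ℂ] H)).topologicalClosure)) k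
        = ⟨DT ((adjoint T ^ k) h), memDT _⟩ := fun h k => Subtype.ext (hDD h k)
  constructor
  · intro hM h
    have h1 : adjoint (diagL (adjoint Eop) + shiftL.comp (diagL Fop)) (DD h)
        = DD (adjoint A h) := ContinuousLinearMap.ext_iff.mp hM h
    have e0 : (DD h : ∀ _ : ℕ, ↥((LinearMap.range (DT : H →ₗ[ℂ] H)).topologicalClosure)) 0
        = ⟨DT h, memDT _⟩ := Subtype.ext (by simpa using hDD h 0)
    have e1 : (DD h : ∀ _ : ℕ, ↥((LinearMap.range (DT : H →ₗ[ℂ] H)).topologicalClosure)) 1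
        = ⟨DT (adjoint T h), memDT _⟩ := Subtype.ext (by simpa using hDD h 1)
    calc DT (adjoint A h)
        = ((DD (adjoint A h) : ∀ _ : ℕ, ↥((LinearMap.range (DT : H →ₗ[ℂ] H)).topologicalClosure)) 0 : H) :=
          by simpa using (hDD (adjoint A h) 0).symm
      _ = ((adjoint (diagL (adjoint Eop) + shiftL.comp (diagL Fop)) (DD h)
            : ∀ _ : ℕ, ↥((LinearMap.range (DT : H →ₗ[ℂ] H)).topologicalClosure)) 0 : H) := by rw [h1]
      _ = _ := by rw [adjoint_MPhi_apply, e0, e1]; simp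
  · intro hfund
    ext h k
    have lhs : (((adjoint (diagL (adjoint Eop) + shiftL.comp (diagL Fop))).comp DD h
          : ∀ _ : ℕ, ↥((LinearMap.range (DT : H →ₗ[ℂ] H)).topologicalClosure)) k : H)
        = (↑(Eop ⟨DT ((adjoint T ^ k) h), memDT _⟩) : H)
          + (↑((adjoint Fop) ⟨DT ((adjoint T ^ (k + 1)) h), memDT _⟩) : H) := by
      rw [ContinuousLinearMap.comp_apply, adjoint_MPhi_apply, DDk h k, DDk h (k + 1)]
      simp
    rw [lhs]
    have rhs : (((DD.comp (adjoint A)) h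
          : ∀ _ : ℕ, ↥((LinearMap.range (DT : H →ₗ[ℂ] H)).topologicalClosure)) k : H)
        = DT (adjoint A ((adjoint T ^ k) h)) := by
      rw [ContinuousLinearMap.comp_apply, hDD, hck]
    rw [rhs, hfund ((adjoint T ^ k) h)]
    have hpow : (adjoint T ^ (k + 1)) h = adjoint T ((adjoint T ^ k) h) := by
      rw [pow_succ']; rfl
    congr 2
    exact congrArg _ (Subtype.ext (congrArg DT hpow))
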